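/- (Noisy data.) Let K ⊆ C(Ω) be compact in C(Ω), let 0 < τ < 1, 0 < γ ≤ 1, and let δ > 0 satisfy δ ≤ τ². Let Σ ⊆ C(Ω) be such that every f ∈ K admits g ∈ Σ with ‖f − g‖_{C(Ω)} ≤ δ. Let f ∈ K, let η ∈ ℝ^m with ‖η‖ ≤ γ, and set w̃ := λ_x(f) + η. Suppose f̂ ∈ Σ minimizes the loss L_{K,τ}(g) := τ‖w̃ − λ_x(g)‖ + dist(g,K)_{C(Ω)} over g ∈ Σ, where dist(g,K)_{C(Ω)} := inf_{h ∈ K} ‖g − h‖_{C(Ω)}. Then ‖j(f) − j(f̂)‖_X ≤ 2 R(K(w̃, γ + 5τ))_X + 3 C_X τ. -/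

import Mathlib

/-- Chebyshev radius in `X` of the image under `J` of a set `S`:
`R(S)_X = inf_{z ∈ X} sup_{f ∈ S} ‖J f - z‖`. -/
noncomputable def chebRadMap {A X : Type*} [NormedAddCommGroup X]
    (J : A → X) (S : Set A) : ℝ :=
  ⨅ z : X, ⨆ f : S, ‖J (f : A) - z‖

/-- Weighted euclidean norm on `ℝ^m`: `‖v‖ = ( m⁻¹ ∑ v_j² )^{1/2}`. -/
noncomputable def wNorm {m : ℕ} (v : Fin m → ℝ) : ℝ :=
  Real.sqrt ((∑ j, v j ^ 2) / m)


lemma wNorm_nonneg {m : ℕ} (v : Fin m → ℝ) : 0 ≤ wNorm v := Real.sqrt_nonneg _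

lemma wNorm_eq_norm {m : ℕ} (v : Fin m → ℝ) :
    wNorm v = ‖(WithLp.equiv 2 (Fin m → ℝ)).symm v‖ / Real.sqrt m := by
  rw [wNorm, EuclideanSpace.norm_eq, Real.sqrt_div (by positivity)]
  congr 2
  exact Finset.sum_congr rfl fun j _ => by
    simp [WithLp.equiv_symm_apply, PiLp.toLp_apply, Real.norm_eq_abs, sq_abs]

lemma wNorm_triangle {m : ℕ} (a b c : Fin m → ℝ) :
    wNorm (fun j => a j - c j) ≤ wNorm (fun j => a j - b j) + wNorm (fun j => b j - c j) := by
  rw [wNorm_eq_norm, wNorm_eq_norm, wNorm_eq_norm, ← add_div]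
  have hs : (0:ℝ) ≤ Real.sqrt m := Real.sqrt_nonneg _
  have key : (WithLp.equiv 2 (Fin m → ℝ)).symm (fun j => a j - c j) =
      (WithLp.equiv 2 (Fin m → ℝ)).symm (fun j => a j - b j) +
      (WithLp.equiv 2 (Fin m → ℝ)).symm (fun j => b j - c j) := by
    ext j
    simp [WithLp.equiv_symm_apply, PiLp.toLp_apply]
  rw [key]
  gcongr
  exact norm_add_le _ _

lemma wNorm_le {m : ℕ} (v : Fin m → ℝ) (M : ℝ) (hM : 0 ≤ M) (h : ∀ j, |v j| ≤ M) :
    wNorm v ≤ M := by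
  rw [wNorm]
  rw [show M = Real.sqrt (M^2) from (Real.sqrt_sq hM).symm]
  apply Real.sqrt_le_sqrt
  rcases Nat.eq_zero_or_pos m with hm | hm
  · subst hm; simp; positivity
  · rw [div_le_iff₀ (by exact_mod_cast hm)]
    calc ∑ j, v j ^ 2 ≤ ∑ _j : Fin m, M ^ 2 := by
          apply Finset.sum_le_sum
          intro j _
          calc v j ^ 2 = |v j| ^ 2 := (sq_abs _).symm
            _ ≤ M ^ 2 := pow_le_pow_left₀ (abs_nonneg _) (h j) 2
      _ = M ^ 2 * m := by simp [mul_comm]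

lemma wNorm_sub_comm {m : ℕ} (a b : Fin m → ℝ) :
    wNorm (fun j => a j - b j) = wNorm (fun j => b j - a j) := by
  unfold wNorm
  congr 2
  exact Finset.sum_congr rfl fun j _ => by ring

lemma norm_sub_le_two_chebRad {A X : Type*} [NormedAddCommGroup X] [Nonempty X]
    (J : A → X) (S : Set A) (M : ℝ) (hM : ∀ u ∈ S, ‖J u‖ ≤ M)
    {u v : A} (hu : u ∈ S) (hv : v ∈ S) :
    ‖J u - J v‖ ≤ 2 * chebRadMap J S := by
  have key : ∀ z : X, ‖J u - J v‖ / 2 ≤ ⨆ f : S, ‖J (f : A) - z‖ := by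
    intro z
    have hbdd : BddAbove (Set.range fun f : S => ‖J (f : A) - z‖) := by
      refine ⟨M + ‖z‖, ?_⟩
      rintro _ ⟨g, rfl⟩
      calc ‖J (g : A) - z‖ ≤ ‖J (g : A)‖ + ‖z‖ := norm_sub_le _ _
        _ ≤ M + ‖z‖ := by have := hM g g.2; linarith
    have h1 : ‖J u - z‖ ≤ ⨆ f : S, ‖J (f : A) - z‖ := le_ciSup hbdd ⟨u, hu⟩
    have h2 : ‖J v - z‖ ≤ ⨆ f : S, ‖J (f : A) - z‖ := le_ciSup hbdd ⟨v, hv⟩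
    have h3 : ‖J u - J v‖ ≤ ‖J u - z‖ + ‖z - J v‖ := norm_sub_le_norm_sub_add_norm_sub _ _ _
    rw [norm_sub_rev z] at h3
    linarith
  have := le_ciInf key
  rw [chebRadMap]
  linarith

/-- Noisy point-value data: if `w̃ = λ_x(f) + η` with `‖η‖ ≤ γ ≤ 1`, `0 < τ < 1`,
`δ ≤ τ²`, and `f̂` minimizes `L_{K,τ}(g) := τ‖w̃ − λ_x(g)‖ + dist(g,K)_{C(Ω)}`
over `Σ`, then `‖j(f) − j(f̂)‖_X ≤ 2 R(K(w̃, γ+5τ))_X + 3 C_X τ`. -/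
theorem stmt_10
    {d : ℕ} {Ω : Set (EuclideanSpace ℝ (Fin d))} [CompactSpace Ω]
    {X : Type*} [NormedAddCommGroup X] [NormedSpace ℝ X] [CompleteSpace X]
    {m : ℕ} (hm : 0 < m) (x : Fin m → Ω)
    (J : C(Ω, ℝ) →ₗ[ℝ] X) (hJinj : Function.Injective J)
    (CX : ℝ) (hJ : ∀ g : C(Ω, ℝ), ‖J g‖ ≤ CX * ‖g‖)
    (K : Set C(Ω, ℝ)) (hK : IsCompact K)
    (τ γ δ : ℝ) (hτ0 : 0 < τ) (hτ1 : τ < 1) (hγ0 : 0 < γ) (hγ1 : γ ≤ 1)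
    (hδ : 0 < δ) (hδτ : δ ≤ τ ^ 2)
    (Sig : Set C(Ω, ℝ))
    (happrox : ∀ f ∈ K, ∃ g ∈ Sig, ‖f - g‖ ≤ δ)
    (f : C(Ω, ℝ)) (hf : f ∈ K)
    (η : Fin m → ℝ) (hη : wNorm η ≤ γ)
    (fhat : C(Ω, ℝ)) (hfhat : fhat ∈ Sig)
    (hmin : ∀ g ∈ Sig,
      τ * wNorm (fun j => (f (x j) + η j) - fhat (x j)) + Metric.infDist fhat K ≤
        τ * wNorm (fun j => (f (x j) + η j) - g (x j)) + Metric.infDist g K) :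
    ‖J f - J fhat‖ ≤
      2 * chebRadMap (fun u => J u)
        {u ∈ K | wNorm (fun j => u (x j) - (f (x j) + η j)) ≤ γ + 5 * τ} +
      3 * CX * τ := by
  haveI : Nonempty Ω := ⟨x ⟨0, hm⟩⟩
  -- CX is nonnegative
  have hCX : 0 ≤ CX := by
    have h1 := hJ 1
    have h2 : ‖(1 : C(Ω, ℝ))‖ = 1 := by simp
    rw [h2, mul_one] at h1
    exact le_trans (norm_nonneg _) h1
  -- pointwise bound lemma
  have ptbd : ∀ g h : C(Ω, ℝ), wNorm (fun j => g (x j) - h (x j)) ≤ ‖g - h‖ := by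
    intro g h
    apply wNorm_le _ _ (norm_nonneg _)
    intro j
    have := (g - h).norm_coe_le_norm (x j)
    simpa [Real.norm_eq_abs] using this
  -- approximant to f
  obtain ⟨g0, hg0S, hg0⟩ := happrox f hf
  -- bound on the loss of g0
  have hssη : wNorm (fun j => (f (x j) + η j) - f (x j)) = wNorm η := by
    simp
  have hWg0 : wNorm (fun j => (f (x j) + η j) - g0 (x j)) ≤ γ + δ := by
    have := wNorm_triangle (fun j => f (x j) + η j) (fun j => f (x j)) (fun j => g0 (x j))
    rw [hssη] at this
    have h2 := ptbd f g0
    have h3 : ‖f - g0‖ ≤ δ := hg0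
    linarith
  have hdg0 : Metric.infDist g0 K ≤ δ := by
    calc Metric.infDist g0 K ≤ dist g0 f := Metric.infDist_le_dist_of_mem hf
      _ = ‖f - g0‖ := by rw [dist_eq_norm, norm_sub_rev]
      _ ≤ δ := hg0
  have hL := hmin g0 hg0S
  have hLb : τ * wNorm (fun j => (f (x j) + η j) - fhat (x j)) + Metric.infDist fhat K ≤
      τ * γ + 2 * τ ^ 2 := by
    have h1 : τ * wNorm (fun j => (f (x j) + η j) - g0 (x j)) ≤ τ * (γ + δ) :=
      mul_le_mul_of_nonneg_left hWg0 hτ0.le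
    nlinarith [hL, hdg0]
  have hWnn : 0 ≤ wNorm (fun j => (f (x j) + η j) - fhat (x j)) := wNorm_nonneg _
  have hDnn : 0 ≤ Metric.infDist fhat K := Metric.infDist_nonneg
  have hA : wNorm (fun j => (f (x j) + η j) - fhat (x j)) ≤ γ + 2 * τ := by
    nlinarith
  have hB : Metric.infDist fhat K ≤ 3 * τ := by nlinarith
  -- nearest point in K to fhat
  obtain ⟨h, hhK, hdist⟩ := hK.exists_infDist_eq_dist ⟨f, hf⟩ fhat
  have hfh : ‖fhat - h‖ ≤ 3 * τ := by
    rw [← dist_eq_norm, ← hdist]; exact hB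
  -- membership in the admissible set
  set S : Set C(Ω, ℝ) :=
    {u ∈ K | wNorm (fun j => u (x j) - (f (x j) + η j)) ≤ γ + 5 * τ} with hS
  have hhS : h ∈ S := by
    refine ⟨hhK, ?_⟩
    have t1 := wNorm_triangle (fun j => h (x j)) (fun j => fhat (x j))
      (fun j => f (x j) + η j)
    have t2 : wNorm (fun j => h (x j) - fhat (x j)) ≤ 3 * τ := by
      calc wNorm (fun j => h (x j) - fhat (x j)) ≤ ‖h - fhat‖ := ptbd h fhat
        _ = ‖fhat - h‖ := norm_sub_rev _ _
        _ ≤ 3 * τ := hfh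
    have t3 : wNorm (fun j => fhat (x j) - (f (x j) + η j)) ≤ γ + 2 * τ := by
      rw [wNorm_sub_comm]; exact hA
    linarith
  have hfS : f ∈ S := by
    refine ⟨hf, ?_⟩
    have : wNorm (fun j => f (x j) - (f (x j) + η j)) = wNorm η := by
      unfold wNorm
      congr 2
      exact Finset.sum_congr rfl fun j _ => by ring
    rw [this]
    linarith
  -- boundedness of J on S
  obtain ⟨M0, hM0⟩ := (isBounded_iff_forall_norm_le).mp hK.isBounded
  have hMS : ∀ u ∈ S, ‖(fun u => J u) u‖ ≤ CX * M0 := by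
    intro u hu
    calc ‖J u‖ ≤ CX * ‖u‖ := hJ u
      _ ≤ CX * M0 := mul_le_mul_of_nonneg_left (hM0 u hu.1) hCX
  -- final combination
  have hfirst : ‖J f - J h‖ ≤ 2 * chebRadMap (fun u => J u) S :=
    norm_sub_le_two_chebRad (fun u => J u) S (CX * M0) hMS hfS hhS
  have hsecond : ‖J h - J fhat‖ ≤ 3 * CX * τ := by
    calc ‖J h - J fhat‖ = ‖J (h - fhat)‖ := by rw [map_sub]
      _ ≤ CX * ‖h - fhat‖ := hJ _
      _ = CX * ‖fhat - h‖ := by rw [norm_sub_rev]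
      _ ≤ CX * (3 * τ) := mul_le_mul_of_nonneg_left hfh hCX
      _ = 3 * CX * τ := by ring
  have htri : ‖J f - J fhat‖ ≤ ‖J f - J h‖ + ‖J h - J fhat‖ :=
    norm_sub_le_norm_sub_add_norm_sub _ _ _
  linarith
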